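/- In the two-real-root case, for x > r₂ the function w(x,t) = exp((α₀ r₁ + γ₀) t) · [ (r₁ - r₂) / ( (x - r₂) - (x - r₁) exp(A(r₁-r₂) t) ) ]^{α₀/A} satisfies ∂w/∂t = A(x-r₁)(x-r₂)·∂w/∂x + (α₀ x + γ₀) w with w(x,0)=1, on the region where the bracketed quantity is positive. -/

import Mathlib

/-- Two-real-root case: for `x > r₂`, the function
`w(x,t) = exp((α₀ r₁ + γ₀)t) [ (r₁-r₂) / ((x-r₂) - (x-r₁) e^{A(r₁-r₂)t}) ]^{α₀/A}`
solves `∂w/∂t = A(x-r₁)(x-r₂) ∂w/∂x + (α₀ x + γ₀) w` with `w(x,0)=1`,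
on the region where the bracketed quantity is positive. -/
theorem stmt_4 (A α₀ γ₀ r₁ r₂ : ℝ) (hA : 0 < A) (hα : 0 < α₀) (hr : r₁ < r₂)
    (w : ℝ → ℝ → ℝ)
    (hw : ∀ x t, w x t
      = Real.exp ((α₀ * r₁ + γ₀) * t)
        * ((r₁ - r₂) / ((x - r₂) - (x - r₁) * Real.exp (A * (r₁ - r₂) * t))) ^ (α₀ / A)) :
    (∀ x t, r₂ < x →
        0 < (r₁ - r₂) / ((x - r₂) - (x - r₁) * Real.exp (A * (r₁ - r₂) * t)) →
        deriv (fun s => w x s) t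
          = A * (x - r₁) * (x - r₂) * deriv (fun y => w y t) x + (α₀ * x + γ₀) * w x t)
      ∧ (∀ x, w x 0 = 1) := by
  have hcne : r₁ - r₂ ≠ 0 := sub_ne_zero.mpr hr.ne
  constructor
  · intro x t hx hpos
    have hDne : (x - r₂) - (x - r₁) * Real.exp (A * (r₁ - r₂) * t) ≠ 0 := by
      intro h
      rw [h, div_zero] at hpos
      exact lt_irrefl 0 hpos
    have hgne : (r₁ - r₂) / ((x - r₂) - (x - r₁) * Real.exp (A * (r₁ - r₂) * t)) ≠ 0 :=
      ne_of_gt hpos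
    -- derivative in t
    have h1 : HasDerivAt (fun s : ℝ => A * (r₁ - r₂) * s) (A * (r₁ - r₂)) t := by
      simpa using (hasDerivAt_id t).const_mul (A * (r₁ - r₂))
    have h2 : HasDerivAt (fun s : ℝ => Real.exp (A * (r₁ - r₂) * s))
        (Real.exp (A * (r₁ - r₂) * t) * (A * (r₁ - r₂))) t := h1.exp
    have hDt : HasDerivAt (fun s : ℝ => (x - r₂) - (x - r₁) * Real.exp (A * (r₁ - r₂) * s))
        (-((x - r₁) * (Real.exp (A * (r₁ - r₂) * t) * (A * (r₁ - r₂))))) t :=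
      (h2.const_mul (x - r₁)).const_sub (x - r₂)
    have hgt := (hasDerivAt_const t (r₁ - r₂)).div hDt hDne
    have hpt := hgt.rpow_const (p := α₀ / A) (Or.inl hgne)
    have h3 : HasDerivAt (fun s : ℝ => (α₀ * r₁ + γ₀) * s) (α₀ * r₁ + γ₀) t := by
      simpa using (hasDerivAt_id t).const_mul (α₀ * r₁ + γ₀)
    have hexp : HasDerivAt (fun s : ℝ => Real.exp ((α₀ * r₁ + γ₀) * s))
        (Real.exp ((α₀ * r₁ + γ₀) * t) * (α₀ * r₁ + γ₀)) t := h3.exp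
    have hwt := hexp.mul hpt
    -- derivative in x
    have hDx : HasDerivAt
        (fun y : ℝ => (y - r₂) - (y - r₁) * Real.exp (A * (r₁ - r₂) * t))
        (1 - 1 * Real.exp (A * (r₁ - r₂) * t)) x :=
      ((hasDerivAt_id x).sub_const r₂).sub
        (((hasDerivAt_id x).sub_const r₁).mul_const _)
    have hgx := (hasDerivAt_const x (r₁ - r₂)).div hDx hDne
    have hpx := hgx.rpow_const (p := α₀ / A) (Or.inl hgne)
    have hwx := hpx.const_mul (Real.exp ((α₀ * r₁ + γ₀) * t))
    have e1 : (fun s => w x s)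
        = fun s => Real.exp ((α₀ * r₁ + γ₀) * s)
            * ((r₁ - r₂) / ((x - r₂) - (x - r₁) * Real.exp (A * (r₁ - r₂) * s))) ^ (α₀ / A) :=
      funext fun s => hw x s
    have e2 : (fun y => w y t)
        = fun y => Real.exp ((α₀ * r₁ + γ₀) * t)
            * ((r₁ - r₂) / ((y - r₂) - (y - r₁) * Real.exp (A * (r₁ - r₂) * t))) ^ (α₀ / A) :=
      funext fun y => hw y t
    have hwt' : HasDerivAt (fun s => Real.exp ((α₀ * r₁ + γ₀) * s)
        * ((r₁ - r₂) / ((x - r₂) - (x - r₁) * Real.exp (A * (r₁ - r₂) * s))) ^ (α₀ / A)) _ t := hwt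
    have hwx' : HasDerivAt (fun y => Real.exp ((α₀ * r₁ + γ₀) * t)
        * ((r₁ - r₂) / ((y - r₂) - (y - r₁) * Real.exp (A * (r₁ - r₂) * t))) ^ (α₀ / A)) _ x := hwx
    rw [e1, e2, hw x t, hwt'.deriv, hwx'.deriv]
    simp only [Pi.div_apply]
    rw [Real.rpow_sub_one hgne]
    set P := ((r₁ - r₂) / ((x - r₂) - (x - r₁) * Real.exp (A * (r₁ - r₂) * t))) ^ (α₀ / A) with hP
    set E := Real.exp (A * (r₁ - r₂) * t) with hE
    field_simp
    ring
  · intro x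
    rw [hw x 0]
    simp [mul_comm, hcne]
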